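/- arXiv:2012.03765 — 7 statements merged into one kernel-verified Lean document; each statement's English description precedes it below -/
import Mathlib

section
/- Let X be a metric space, c ≥ 2, r : ℝ, and let D and D' be multisets over X × Fin c. For every test input x : X, the poisoning size between the rNN neighbor multisets satisfies S(N_r(D,x), N_r(D',x)) ≤ S(D, D'). -/
/-- Poisoning size between two multisets: `max (card A) (card B) - card (A ∩ B)`. -/
noncomputable def pSize {α : Type*} (A B : Multiset α) : ℕ :=
  haveI := Classical.decEq α
  max A.card B.card - (A ∩ B).card

noncomputable def Nr {X : Type*} [MetricSpace X] {c : ℕ} (r : ℝ)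
    (D : Multiset (X × Fin c)) (x : X) : Multiset (X × Fin c) :=
  haveI : DecidablePred (fun p : X × Fin c => dist p.1 x ≤ r) := Classical.decPred _
  D.filter (fun p => dist p.1 x ≤ r)

/-- For every test input `x`, the poisoning size between the rNN neighbor
multisets is at most the poisoning size between the training datasets. -/
theorem rnn_neighbors_pSize_le {X : Type*} [MetricSpace X] {c : ℕ} (hc : 2 ≤ c) (r : ℝ)
    (D D' : Multiset (X × Fin c)) (x : X) :
    pSize (Nr r D x) (Nr r D' x) ≤ pSize D D' := by
  unfold pSize Nr
  set p : X × Fin c → Prop := fun q => dist q.1 x ≤ r with hp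
  letI := Classical.decEq (X × Fin c)
  letI : DecidablePred p := Classical.decPred p
  have key : ∀ A B : Multiset (X × Fin c),
      (A.filter p).card ≤ (A.filter p ∩ B.filter p).card + (A.card - (A ∩ B).card) := by
    intro A B
    have h1 := congrArg Multiset.card (Multiset.sub_add_inter (A.filter p) (B.filter p))
    have h2 : (A.filter p - B.filter p).card ≤ (A - B).card := by
      rw [← Multiset.filter_sub]
      exact Multiset.card_le_card (Multiset.filter_le _ _)
    have h3 := congrArg Multiset.card (Multiset.sub_add_inter A B)
    rw [Multiset.card_add] at h1 h3
    omega
  have kA := key D D'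
  have kB := key D' D
  rw [Multiset.inter_comm (D'.filter p), Multiset.inter_comm D'] at kB
  have hI : (D ∩ D').card ≤ min D.card D'.card :=
    le_min (Multiset.card_le_card Multiset.inter_le_left)
      (Multiset.card_le_card Multiset.inter_le_right)
  rw [Nat.sub_le_iff_le_add]
  have h1 : D.card ≤ max D.card D'.card := le_max_left _ _
  have h2 : D'.card ≤ max D.card D'.card := le_max_right _ _
  refine max_le (kA.trans ?_) (kB.trans ?_) <;> omega
end

section
/- Let c ≥ 2 and let T and T' be multisets over Fin c. Let a be the tie-broken majority label of T, let s_l := count_l(T), and let b be the largest label among those l ≠ a attaining the maximum of s_l over l ≠ a. If S(T,T') ≤ ⌈(s_a − s_b + 𝟙(b < a))/2⌉ − 1 (an inequality of integers), then the tie-broken majority label of T' equals a. -/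
/-- Number of votes for label `l` in a multiset of labeled examples (counted with
multiplicity). -/
def votes {X : Type*} {c : ℕ} (T : Multiset (X × Fin c)) (l : Fin c) : ℕ :=
  T.countP (fun p => p.2 = l)

/-- Tie-broken majority label: the largest label (in the order of `Fin c`) among the
labels attaining the maximum vote count. -/
noncomputable def majLabel {X : Type*} {c : ℕ} (hc : 0 < c) (T : Multiset (X × Fin c)) :
    Fin c :=
  (Finset.univ.filter (fun l : Fin c => ∀ l', votes T l' ≤ votes T l)).max'
    (by
      haveI : NeZero c := ⟨hc.ne'⟩
      obtain ⟨b, -, hb⟩ := Finset.exists_max_image (Finset.univ : Finset (Fin c)) (votes T)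
        Finset.univ_nonempty
      exact ⟨b, Finset.mem_filter.mpr ⟨Finset.mem_univ b, fun l' => hb l' (Finset.mem_univ l')⟩⟩)

/-- The largest label, among those `l ≠ a`, attaining the maximum of `s l` over `l ≠ a`. -/
noncomputable def secondLabel {c : ℕ} (hc : 2 ≤ c) (s : Fin c → ℕ) (a : Fin c) : Fin c :=
  (Finset.univ.filter (fun l : Fin c => l ≠ a ∧ ∀ l', l' ≠ a → s l' ≤ s l)).max'
    (by
      have h1 : 1 < Fintype.card (Fin c) := by rw [Fintype.card_fin]; omega
      obtain ⟨l0, hl0⟩ := Fintype.exists_ne_of_one_lt_card h1 a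
      have hne : (Finset.univ.filter (fun l : Fin c => l ≠ a)).Nonempty :=
        ⟨l0, Finset.mem_filter.mpr ⟨Finset.mem_univ _, hl0⟩⟩
      obtain ⟨b, hb, hbmax⟩ := Finset.exists_max_image _ s hne
      refine ⟨b, Finset.mem_filter.mpr ⟨Finset.mem_univ _, (Finset.mem_filter.mp hb).2, ?_⟩⟩
      intro l' hl'
      exact hbmax l' (Finset.mem_filter.mpr ⟨Finset.mem_univ _, hl'⟩))

/-- Tie-broken majority label of a multiset of labels: the largest label (in the order
of `Fin c`) among the labels attaining the maximum multiplicity. -/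
noncomputable def majP {c : ℕ} (hc : 0 < c) (T : Multiset (Fin c)) : Fin c :=
  (Finset.univ.filter (fun l : Fin c => ∀ l', T.count l' ≤ T.count l)).max'
    (by
      haveI : NeZero c := ⟨hc.ne'⟩
      obtain ⟨b, -, hb⟩ := Finset.exists_max_image (Finset.univ : Finset (Fin c))
        (fun l => T.count l) Finset.univ_nonempty
      exact ⟨b, Finset.mem_filter.mpr ⟨Finset.mem_univ b, fun l' => hb l' (Finset.mem_univ l')⟩⟩)



private lemma count_le_add_psize' {c : ℕ} (A B : Multiset (Fin c)) (l : Fin c) :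
    A.count l ≤ B.count l + pSize A B := by
  classical
  have hps : pSize A B = max A.card B.card - (A ∩ B).card := by
    unfold pSize
    congr 2
    congr 1
    congr 1
    exact Subsingleton.elim _ _
  rw [hps]
  obtain ⟨u, hu⟩ := Multiset.le_iff_exists_add.mp (Multiset.inter_le_left : A ∩ B ≤ A)
  have hcount : A.count l = (A ∩ B).count l + u.count l := by
    conv_lhs => rw [hu]
    simp
  have h1 : (A ∩ B).count l ≤ B.count l := Multiset.count_le_of_le l (Multiset.inter_le_right : A ∩ B ≤ B)
  have h2 : u.count l ≤ u.card := Multiset.count_le_card l u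
  have h3 : A.card = (A ∩ B).card + u.card := by
    conv_lhs => rw [hu]
    simp
  have h4 : A.card ≤ max A.card B.card := le_max_left _ _
  omega

private lemma psize_comm' {c : ℕ} (A B : Multiset (Fin c)) : pSize A B = pSize B A := by
  unfold pSize
  rw [max_comm]
  rw [@Multiset.inter_comm _ (Classical.decEq _) A B]

private lemma two_ceil_le' (n : ℤ) : 2 * ⌈((n : ℚ)) / 2⌉ ≤ n + 1 := by
  have h1 : (⌈((n : ℚ)) / 2⌉ : ℚ) < (n : ℚ) / 2 + 1 := Int.ceil_lt_add_one _
  have h2 : (2 * ⌈((n : ℚ)) / 2⌉ : ℚ) < (n : ℚ) + 2 := by linarith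
  have h3 : (2 * ⌈((n : ℚ)) / 2⌉ : ℤ) < n + 2 := by exact_mod_cast h2
  omega

/-- if the poisoning size between the label multisets `T` and `T'` is at most
`⌈(s_a − s_b + 𝟙(b < a))/2⌉ − 1`, the tie-broken majority label of `T'` equals that of `T`. -/
theorem majority_label_stable {c : ℕ} (hc : 2 ≤ c) (T T' : Multiset (Fin c)) (a b : Fin c)
    (ha : a = majP (by omega) T)
    (hb : b = secondLabel hc (fun l => T.count l) a)
    (h : (pSize T T' : ℤ) ≤
      ⌈(((T.count a : ℤ) - (T.count b : ℤ) + if b < a then 1 else 0 : ℤ) : ℚ) / 2⌉ - 1) :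
    majP (by omega : 0 < c) T' = a := by
  classical
  -- facts about a
  simp only [majP] at ha
  have haMem : a ∈ Finset.univ.filter (fun l : Fin c => ∀ l', T.count l' ≤ T.count l) :=
    ha ▸ Finset.max'_mem _ _
  have ha1 : ∀ l, T.count l ≤ T.count a := (Finset.mem_filter.mp haMem).2
  have ha2 : ∀ m : Fin c, (∀ l', T.count l' ≤ T.count m) → m ≤ a := by
    intro m hm
    rw [ha]
    exact Finset.le_max' _ m (Finset.mem_filter.mpr ⟨Finset.mem_univ _, hm⟩)
  -- facts about b
  simp only [secondLabel] at hb
  have hbMem : b ∈ Finset.univ.filter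
      (fun l : Fin c => l ≠ a ∧ ∀ l', l' ≠ a → T.count l' ≤ T.count l) :=
    hb ▸ Finset.max'_mem _ _
  have hb1 : b ≠ a := (Finset.mem_filter.mp hbMem).2.1
  have hb2 : ∀ l, l ≠ a → T.count l ≤ T.count b := (Finset.mem_filter.mp hbMem).2.2
  have hb3 : ∀ m : Fin c, m ≠ a → (∀ l', l' ≠ a → T.count l' ≤ T.count m) → m ≤ b := by
    intro m hm1 hm2
    rw [hb]
    exact Finset.le_max' _ m (Finset.mem_filter.mpr ⟨Finset.mem_univ _, hm1, hm2⟩)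
  -- count stability
  set k : ℕ := pSize T T' with hk
  have hup : ∀ l, T'.count l ≤ T.count l + k := by
    intro l
    have := count_le_add_psize' T' T l
    rwa [psize_comm' T' T] at this
  have hdown : ∀ l, T.count l ≤ T'.count l + k := fun l => count_le_add_psize' T T' l
  -- arithmetic bound on k
  have h2k : 2 * (k : ℤ) ≤ (T.count a : ℤ) - (T.count b : ℤ) +
      (if b < a then 1 else 0) - 1 := by
    have hceil := two_ceil_le' ((T.count a : ℤ) - (T.count b : ℤ) + if b < a then 1 else 0)
    have h' : (k : ℤ) + 1 ≤
        ⌈((((T.count a : ℤ) - (T.count b : ℤ) + if b < a then 1 else 0 : ℤ)) : ℚ) / 2⌉ := by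
      omega
    push_cast at hceil h' ⊢
    omega
  -- key per-label inequalities
  have key : ∀ l, l ≠ a → (T'.count l : ℤ) ≤ (T'.count a : ℤ) +
      ((T.count l : ℤ) - (T.count a : ℤ)) + 2 * k := by
    intro l hl
    have h1 := hup l
    have h2 := hdown a
    push_cast
    omega
  -- main case analysis
  by_cases hba : b < a
  · -- weak inequality for all l ≠ a, strict for l > a
    have hweak : ∀ l, T'.count l ≤ T'.count a := by
      intro l
      by_cases hl : l = a
      · rw [hl]
      · have h1 := key l hl
        have h2 : (T.count l : ℤ) ≤ T.count b := by exact_mod_cast hb2 l hl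
        simp only [hba, if_pos] at h2k
        omega
    have hstrict : ∀ l, a < l → T'.count l < T'.count a := by
      intro l hal
      have hl : l ≠ a := ne_of_gt hal
      have hlb : ¬ l ≤ b := fun hle => absurd (lt_of_le_of_lt hle hba) (asymm hal)
      have hsl : (T.count l : ℤ) ≤ (T.count b : ℤ) - 1 := by
        have h2 : T.count l ≤ T.count b := hb2 l hl
        rcases lt_or_eq_of_le h2 with h3 | h3
        · push_cast; omega
        · exfalso
          apply hlb
          apply hb3 l hl
          intro l' hl'
          rw [h3]
          exact hb2 l' hl'
      have h1 := key l hl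
      simp only [hba, if_pos] at h2k
      have h2 : (T.count b : ℤ) ≤ T.count a := by exact_mod_cast ha1 b
      omega
    -- conclude
    simp only [majP]
    apply le_antisymm
    · apply Finset.max'_le
      intro m hm
      by_contra ham
      push_neg at ham
      have := (Finset.mem_filter.mp hm).2 a
      exact absurd this (not_le.mpr (hstrict m ham))
    · exact Finset.le_max' _ a (Finset.mem_filter.mpr ⟨Finset.mem_univ _, hweak⟩)
  · -- a < b; strict inequality for all l ≠ a
    have hab : a < b := lt_of_le_of_ne (not_lt.mp hba) (Ne.symm hb1)
    have hsba : (T.count b : ℤ) ≤ (T.count a : ℤ) - 1 := by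
      have h2 : T.count b ≤ T.count a := ha1 b
      rcases lt_or_eq_of_le h2 with h3 | h3
      · push_cast; omega
      · exfalso
        have hba2 : b ≤ a := ha2 b (fun l' => by rw [h3]; exact ha1 l')
        exact absurd hba2 (not_le.mpr hab)
    have hstrict : ∀ l, l ≠ a → T'.count l < T'.count a := by
      intro l hl
      have h1 := key l hl
      have h2 : (T.count l : ℤ) ≤ T.count b := by exact_mod_cast hb2 l hl
      simp only [hba, if_neg, if_false] at h2k
      omega
    simp only [majP]
    apply le_antisymm
    · apply Finset.max'_le
      intro m hm
      by_contra ham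
      push_neg at ham
      have := (Finset.mem_filter.mp hm).2 a
      exact absurd this (not_le.mpr (hstrict m (ne_of_gt ham)))
    · apply Finset.le_max' _ a
      apply Finset.mem_filter.mpr
      refine ⟨Finset.mem_univ _, fun l' => ?_⟩
      by_cases hl : l' = a
      · rw [hl]
      · exact le_of_lt (hstrict l' hl)
end

section
/- Let X be a metric space, c ≥ 2, r : ℝ, D and D* multisets over X × Fin c, and x : X. Then for every label l ∈ Fin c, the vote counts among rNN neighbors satisfy s_l(N_r(D,x)) − S(D,D*) ≤ s_l(N_r(D*,x)) ≤ s_l(N_r(D,x)) + S(D,D*); in particular, each poisoned training example changes each label's vote count among the rNN neighbors by at most one. -/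
/-- each label's vote count among the rNN neighbors changes by at most the
poisoning size `S(D,D*)`. -/
theorem rnn_votes_stable {X : Type*} [MetricSpace X] {c : ℕ} (hc : 2 ≤ c) (r : ℝ)
    (D Dstar : Multiset (X × Fin c)) (x : X) (l : Fin c) :
    (votes (Nr r D x) l : ℤ) - (pSize D Dstar : ℤ) ≤ (votes (Nr r Dstar x) l : ℤ) ∧
      (votes (Nr r Dstar x) l : ℤ) ≤ (votes (Nr r D x) l : ℤ) + (pSize D Dstar : ℤ) := by
  classical
  have key : ∀ (q : X × Fin c → Prop) (_ : DecidablePred q) (A B : Multiset (X × Fin c)),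
      A.countP q ≤ B.countP q + (max A.card B.card - (A ∩ B).card) := by
    intro q hq A B
    have h1 : A ∩ B ≤ A := Multiset.inter_le_left
    have h2 : A.countP q = (A - A ∩ B).countP q + (A ∩ B).countP q := by
      rw [← Multiset.countP_add, tsub_add_cancel_of_le h1]
    have h3 : (A ∩ B).countP q ≤ B.countP q :=
      Multiset.countP_le_of_le _ Multiset.inter_le_right
    have h4 : (A - A ∩ B).countP q ≤ (A - A ∩ B).card := Multiset.countP_le_card _ _
    have h5 : (A - A ∩ B).card = A.card - (A ∩ B).card := Multiset.card_sub h1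
    have h6 : (A ∩ B).card ≤ A.card := Multiset.card_le_card h1
    have h7 : A.card ≤ max A.card B.card := le_max_left _ _
    omega
  have hv : ∀ E : Multiset (X × Fin c),
      votes (Nr r E x) l = E.countP (fun p => p.2 = l ∧ dist p.1 x ≤ r) := by
    intro E
    simp only [votes, Nr]
    rw [Multiset.countP_filter]
  have hAB := key (fun p => p.2 = l ∧ dist p.1 x ≤ r) (by infer_instance) D Dstar
  have hBA := key (fun p => p.2 = l ∧ dist p.1 x ≤ r) (by infer_instance) Dstar D
  rw [Multiset.inter_comm] at hBA
  rw [max_comm] at hBA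
  have hD := hv D
  have hDs := hv Dstar
  have hps : pSize D Dstar = max D.card Dstar.card - (D ∩ Dstar).card := by
    unfold pSize
    congr!
  rw [hps]
  constructor <;> omega
end

section
/- Let X be a metric space, c ≥ 2, k a natural number, ρ : X × Fin c → ℕ injective, and x : X. If D and D' are multisets over X × Fin c with S(D,D') ≤ 1 (i.e., D' is obtained from D by modifying, adding, or removing at most one example), then the kNN neighbor multisets satisfy S(N_k(D,x), N_k(D',x)) ≤ 1. -/
section PSizeAux

variable {α : Type*}

lemma coe_take_orderedInsert (r : α → α → Prop) [DecidableRel r] (k : ℕ) (a : α) (L : List α) :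
    ((List.orderedInsert r a L).take k : Multiset α) = ↑(L.take k) ∨
    ((List.orderedInsert r a L).take k : Multiset α) = a ::ₘ ↑(L.take (k - 1)) := by
  rw [List.orderedInsert_eq_take_drop]
  set t := L.takeWhile (fun b => ¬ r a b) with ht
  set d := L.dropWhile (fun b => ¬ r a b) with hd
  have hL : t ++ d = L := List.takeWhile_append_dropWhile
  by_cases hk : k ≤ t.length
  · left
    rw [List.take_append_of_le_length hk, ← hL, List.take_append_of_le_length hk]
  · push_neg at hk
    right
    have hL1 : ((t ++ a :: d).take k : List α) = t ++ a :: d.take (k - 1 - t.length) := by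
      rw [List.take_append, List.take_of_length_le (by omega)]
      have h1 : k - t.length = (k - 1 - t.length) + 1 := by omega
      rw [h1, List.take_succ_cons]
    have hL2 : (L.take (k - 1) : List α) = t ++ d.take (k - 1 - t.length) := by
      rw [← hL, List.take_append, List.take_of_length_le (by omega)]
    rw [hL1, hL2, Multiset.cons_coe, Multiset.coe_eq_coe]
    exact List.perm_middle

lemma coe_take_pred_le (L : List α) (k : ℕ) :
    ((L.take (k - 1) : List α) : Multiset α) ≤ ↑(L.take k) := by
  rw [Multiset.coe_le]
  have h : L.take (k - 1) = (L.take k).take (k - 1) := by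
    rw [List.take_take]
    congr 1
    omega
  rw [h]
  exact (List.take_sublist _ _).subperm

variable (r : α → α → Prop) [DecidableRel r] [IsTrans α r] [IsAntisymm α r] [IsTotal α r]

lemma take_sort_card (k : ℕ) (D : Multiset α) :
    (((Multiset.sort D r).take k : List α) : Multiset α).card = min k (Multiset.card D) := by
  rw [Multiset.coe_card, List.length_take, Multiset.length_sort]

lemma sort_cons_eq (a : α) (D : Multiset α) :
    Multiset.sort (a ::ₘ D) r = List.orderedInsert r a (Multiset.sort D r) := by
  apply List.Perm.eq_of_pairwise' (Multiset.pairwise_sort _ r)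
    (List.Pairwise.orderedInsert a _ (Multiset.pairwise_sort D r))
  rw [← Multiset.coe_eq_coe, Multiset.sort_eq]
  have h2 : ((List.orderedInsert r a (Multiset.sort D r) : List α) : Multiset α)
      = ↑(a :: Multiset.sort D r) :=
    Multiset.coe_eq_coe.mpr (List.perm_orderedInsert r a _)
  rw [h2, ← Multiset.cons_coe, Multiset.sort_eq]

lemma take_sort_cons (k : ℕ) (a : α) (D : Multiset α) :
    (((Multiset.sort (a ::ₘ D) r).take k : List α) : Multiset α)
        = ↑((Multiset.sort D r).take k) ∨
    (((Multiset.sort (a ::ₘ D) r).take k : List α) : Multiset α)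
        = a ::ₘ ↑((Multiset.sort D r).take (k - 1)) := by
  rw [sort_cons_eq]
  exact coe_take_orderedInsert r k a _

lemma pSize_eq [inst : DecidableEq α] (A B : Multiset α) :
    pSize A B = max A.card B.card - (A ∩ B).card := by
  unfold pSize
  rw [Subsingleton.elim (Classical.decEq α) inst]

lemma pSize_le_one_of {A B W : Multiset α} (hA : W ≤ A) (hB : W ≤ B)
    (h1 : A.card ≤ W.card + 1) (h2 : B.card ≤ W.card + 1) : pSize A B ≤ 1 := by
  unfold pSize
  rw [tsub_le_iff_right]
  refine max_le (h1.trans ?_) (h2.trans ?_) <;>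
  · rw [Nat.add_comm]
    exact Nat.add_le_add_left
      (Multiset.card_le_card (@Multiset.le_inter _ (Classical.decEq α) _ _ _ hA hB)) 1

end PSizeAux

/-- The kNN ordering w.r.t. a test input `x`, with ties broken by the ranking `ρ`
(larger ranks first): `p` precedes `q` iff `dist p.1 x < dist q.1 x`, or
`dist p.1 x = dist q.1 x` and `ρ p ≥ ρ q`. -/
def knnLE {X : Type*} [MetricSpace X] {c : ℕ} (ρ : X × Fin c → ℕ) (x : X)
    (p q : X × Fin c) : Prop :=
  dist p.1 x < dist q.1 x ∨ (dist p.1 x = dist q.1 x ∧ ρ q ≤ ρ p)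

/-- kNN neighbor multiset: the first `min k (card D)` elements of `D` in the order
`knnLE ρ x` (sort `D` by this order and take the first `k`). -/
noncomputable def Nk {X : Type*} [MetricSpace X] {c : ℕ} {ρ : X × Fin c → ℕ}
    (hρ : Function.Injective ρ) (k : ℕ) (D : Multiset (X × Fin c)) (x : X) :
    Multiset (X × Fin c) :=
  haveI : DecidableRel (knnLE ρ x) := Classical.decRel _
  haveI : IsTrans _ (knnLE ρ x) := ⟨by
    rintro p q s (h1 | ⟨h1, h1'⟩) (h2 | ⟨h2, h2'⟩)
    · exact Or.inl (h1.trans h2)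
    · exact Or.inl (h1.trans_eq h2)
    · exact Or.inl (h1.trans_lt h2)
    · exact Or.inr ⟨h1.trans h2, h2'.trans h1'⟩⟩
  haveI : IsAntisymm _ (knnLE ρ x) := ⟨by
    rintro p q (h1 | ⟨h1, h1'⟩) (h2 | ⟨h2, h2'⟩)
    · exact absurd h2 (lt_asymm h1)
    · exact absurd h2.symm h1.ne
    · exact absurd h1.symm h2.ne
    · exact hρ (le_antisymm h2' h1')⟩
  haveI : IsTotal _ (knnLE ρ x) := ⟨by
    intro p q
    rcases lt_trichotomy (dist p.1 x) (dist q.1 x) with h | h | h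
    · exact Or.inl (Or.inl h)
    · rcases le_total (ρ q) (ρ p) with h' | h'
      · exact Or.inl (Or.inr ⟨h, h'⟩)
      · exact Or.inr (Or.inr ⟨h.symm, h'⟩)
    · exact Or.inr (Or.inl h)⟩
  (↑((D.sort (knnLE ρ x)).take k) : Multiset (X × Fin c))

section NkAux

variable {X : Type*} [MetricSpace X] {c : ℕ} {ρ : X × Fin c → ℕ}
  (hρ : Function.Injective ρ) (x : X)

lemma knnLE_isTrans : IsTrans (X × Fin c) (knnLE ρ x) := ⟨by
  rintro p q s (h1 | ⟨h1, h1'⟩) (h2 | ⟨h2, h2'⟩)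
  · exact Or.inl (h1.trans h2)
  · exact Or.inl (h1.trans_eq h2)
  · exact Or.inl (h1.trans_lt h2)
  · exact Or.inr ⟨h1.trans h2, h2'.trans h1'⟩⟩

include hρ in
lemma knnLE_isAntisymm : IsAntisymm (X × Fin c) (knnLE ρ x) := ⟨by
  rintro p q (h1 | ⟨h1, h1'⟩) (h2 | ⟨h2, h2'⟩)
  · exact absurd h2 (lt_asymm h1)
  · exact absurd h2.symm h1.ne
  · exact absurd h1.symm h2.ne
  · exact hρ (le_antisymm h2' h1')⟩

lemma knnLE_isTotal : IsTotal (X × Fin c) (knnLE ρ x) := ⟨by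
  intro p q
  rcases lt_trichotomy (dist p.1 x) (dist q.1 x) with h | h | h
  · exact Or.inl (Or.inl h)
  · rcases le_total (ρ q) (ρ p) with h' | h'
    · exact Or.inl (Or.inr ⟨h, h'⟩)
    · exact Or.inr (Or.inr ⟨h.symm, h'⟩)
  · exact Or.inr (Or.inl h)⟩

lemma Nk_card (k : ℕ) (D : Multiset (X × Fin c)) :
    (Nk hρ k D x).card = min k (Multiset.card D) := by
  letI : DecidableRel (knnLE ρ x) := Classical.decRel _
  haveI := knnLE_isTrans (ρ := ρ) (x := x)
  haveI := knnLE_isAntisymm hρ x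
  haveI := knnLE_isTotal (ρ := ρ) (x := x)
  unfold Nk
  exact take_sort_card (knnLE ρ x) k D

lemma Nk_pred_le (k : ℕ) (D : Multiset (X × Fin c)) :
    Nk hρ (k - 1) D x ≤ Nk hρ k D x := by
  unfold Nk
  exact coe_take_pred_le _ k

lemma Nk_cons (k : ℕ) (a : X × Fin c) (D : Multiset (X × Fin c)) :
    Nk hρ k (a ::ₘ D) x = Nk hρ k D x ∨
    Nk hρ k (a ::ₘ D) x = a ::ₘ Nk hρ (k - 1) D x := by
  letI : DecidableRel (knnLE ρ x) := Classical.decRel _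
  haveI := knnLE_isTrans (ρ := ρ) (x := x)
  haveI := knnLE_isAntisymm hρ x
  haveI := knnLE_isTotal (ρ := ρ) (x := x)
  unfold Nk
  exact take_sort_cons (knnLE ρ x) k a D

end NkAux

/-- modifying, adding, or removing at most one training example changes the
kNN neighbor multiset by a poisoning size of at most one. -/
theorem knn_neighbors_pSize_le_one {X : Type*} [MetricSpace X] {c : ℕ} (hc : 2 ≤ c)
    (k : ℕ) {ρ : X × Fin c → ℕ} (hρ : Function.Injective ρ) (x : X)
    (D D' : Multiset (X × Fin c)) (h : pSize D D' ≤ 1) :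
    pSize (Nk hρ k D x) (Nk hρ k D' x) ≤ 1 := by
  haveI dec : DecidableEq (X × Fin c) := Classical.decEq _
  rw [pSize_eq] at h
  have hDc : D.card ≤ (D ∩ D').card + 1 := by
    have := le_max_left D.card D'.card
    omega
  have hD'c : D'.card ≤ (D ∩ D').card + 1 := by
    have := le_max_right D.card D'.card
    omega
  have shape : ∀ E : Multiset (X × Fin c), D ∩ D' ≤ E → E.card ≤ (D ∩ D').card + 1 →
      E = D ∩ D' ∨ ∃ a, E = a ::ₘ (D ∩ D') := by
    intro E hle hcard
    have he : E - (D ∩ D') + (D ∩ D') = E := tsub_add_cancel_of_le hle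
    have hc : (E - (D ∩ D')).card = E.card - (D ∩ D').card := Multiset.card_sub hle
    have h1 : (E - (D ∩ D')).card ≤ 1 := by
      have := Multiset.card_le_card hle
      omega
    rcases Nat.le_one_iff_eq_zero_or_eq_one.mp h1 with h0 | h1
    · left
      rw [← he, Multiset.card_eq_zero.mp h0, zero_add]
    · right
      obtain ⟨a, ha⟩ := Multiset.card_eq_one.mp h1
      exact ⟨a, by rw [← he, ha, Multiset.singleton_add]⟩
  have hD := shape D (Multiset.inter_le_left) hDc
  have hD' := shape D' (Multiset.inter_le_right) hD'c
  have key : ∀ E : Multiset (X × Fin c), (E = D ∩ D' ∨ ∃ a, E = a ::ₘ (D ∩ D')) →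
      Nk hρ (k - 1) (D ∩ D') x ≤ Nk hρ k E x ∧
      (Nk hρ k E x).card ≤ (Nk hρ (k - 1) (D ∩ D') x).card + 1 := by
    rintro E (rfl | ⟨a, rfl⟩)
    · refine ⟨Nk_pred_le hρ x k _, ?_⟩
      rw [Nk_card, Nk_card]
      omega
    · rcases Nk_cons hρ x k a (D ∩ D') with hE | hE <;> rw [hE]
      · refine ⟨Nk_pred_le hρ x k _, ?_⟩
        rw [Nk_card, Nk_card]
        omega
      · exact ⟨Multiset.le_cons_self _ _, by rw [Multiset.card_cons]⟩
  obtain ⟨w1, c1⟩ := key D hD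
  obtain ⟨w2, c2⟩ := key D' hD'
  exact pSize_le_one_of w1 w2 c1 c2
end

section
/- Let X be a metric space, c ≥ 2, k a natural number, ρ : X × Fin c → ℕ injective, and x : X. For all multisets D and D' over X × Fin c, the kNN neighbor multisets satisfy S(N_k(D,x), N_k(D',x)) ≤ S(D, D'). -/
section Helpers

variable {α : Type*} [DecidableEq α]

private lemma cons_sub_of_not_mem' {a : α} {s t : Multiset α} (h : a ∉ t) :
    (a ::ₘ s) - t = a ::ₘ (s - t) := by
  ext b
  rcases eq_or_ne b a with rfl | hb
  · have h0 : t.count b = 0 := Multiset.count_eq_zero_of_notMem h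
    simp [Multiset.count_sub, h0]
  · simp [Multiset.count_sub, Multiset.count_cons_of_ne hb]

private lemma sub_cons_of_not_mem' {a : α} {s t : Multiset α} (h : a ∉ s) :
    s - (a ::ₘ t) = s - t := by
  ext b
  rcases eq_or_ne b a with rfl | hb
  · have h0 : s.count b = 0 := Multiset.count_eq_zero_of_notMem h
    simp [Multiset.count_sub, h0]
  · simp [Multiset.count_sub, Multiset.count_cons_of_ne hb, Multiset.count_erase_of_ne hb]

private lemma cons_sub_cons' (a : α) (s t : Multiset α) :
    (a ::ₘ s) - (a ::ₘ t) = s - t := by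
  ext b
  rcases eq_or_ne b a with rfl | hb
  · simp [Multiset.count_sub]
  · simp [Multiset.count_sub, Multiset.count_cons_of_ne hb]

private lemma card_sub_eq' (s t : Multiset α) :
    (s - t).card = s.card - (s ∩ t).card := by
  rw [← Multiset.sub_inter]
  exact Multiset.card_sub (Multiset.inter_le_left (s := s) (t := t))

/-- Degenerate case of the key lemma: when the take-index on the right is `≤ 0`. -/
private lemma deg (L L' : List α) (j : ℕ) (d : ℤ) (hd : (j : ℤ) + d ≤ 0) :
    ((↑(L.take j) : Multiset α) - ↑(L'.take ((j : ℤ) + d).toNat)).card ≤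
      ((↑L : Multiset α) - ↑L').card + ((L'.length : ℤ) - L.length - d).toNat := by
  have h0 : ((j : ℤ) + d).toNat = 0 := by omega
  rw [h0]
  simp only [List.take_zero, Multiset.coe_nil, Multiset.sub_zero]
  have h1 : ((↑L : Multiset α) - ↑L').card = L.length - ((↑L : Multiset α) ∩ ↑L').card := by
    rw [card_sub_eq', Multiset.coe_card]
  have h2 : ((↑L : Multiset α) ∩ ↑L').card ≤ L'.length := by
    have := Multiset.card_le_card (Multiset.inter_le_right (s := (↑L : Multiset α)) (t := ↑L'))
    simpa using this
  have h3 : ((↑L : Multiset α) ∩ ↑L').card ≤ L.length := by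
    have := Multiset.card_le_card (Multiset.inter_le_left (s := (↑L : Multiset α)) (t := ↑L'))
    simpa using this
  have h4 : (↑(L.take j) : Multiset α).card = min j L.length := by
    rw [Multiset.coe_card, List.length_take]
  omega

/-- Key lemma: for `r`-sorted lists `L, L'`, the multiset difference of prefixes is
controlled by the multiset difference of the full lists plus a length-correction. -/
private theorem key (r : α → α → Prop) [IsTrans α r] [IsAntisymm α r] [IsTotal α r] :
    ∀ (L L' : List α), L.Pairwise r → L'.Pairwise r → ∀ (j : ℕ) (d : ℤ),
    ((↑(L.take j) : Multiset α) - ↑(L'.take ((j : ℤ) + d).toNat)).card ≤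
      ((↑L : Multiset α) - ↑L').card + ((L'.length : ℤ) - L.length - d).toNat
  | L, L', _, _, 0, d => by
      simp only [List.take_zero, Multiset.coe_nil, zero_tsub, Multiset.card_zero]
      exact Nat.zero_le _
  | [], L', _, _, j+1, d => by
      simp only [List.take_nil, Multiset.coe_nil, zero_tsub, Multiset.card_zero]
      exact Nat.zero_le _
  | a :: T, [], _, _, j+1, d => by
      simp only [List.take_nil, Multiset.coe_nil, Multiset.sub_zero]
      have h4 : (↑((a :: T).take (j+1)) : Multiset α).card = min (j+1) (T.length + 1) := by
        rw [Multiset.coe_card, List.length_take, List.length_cons]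
      have h5 : (↑(a :: T) : Multiset α).card = T.length + 1 := by
        rw [Multiset.coe_card, List.length_cons]
      simp only [List.length_nil, List.length_cons]
      omega
  | a :: T, a' :: T', hL, hL', j+1, d => by
      have hcast : ((↑(j+1) : ℤ) + d) = (j : ℤ) + 1 + d := by push_cast; ring
      by_cases hd0 : ((↑(j+1) : ℤ) + d) ≤ 0
      · exact deg _ _ _ _ hd0
      push_neg at hd0
      rw [hcast] at hd0 ⊢
      rcases eq_or_ne a a' with rfl | hne
      · -- equal heads: cancel
        have hm : ((j : ℤ) + 1 + d).toNat = ((j : ℤ) + d).toNat + 1 := by omega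
        rw [hm, List.take_succ_cons, List.take_succ_cons,
          ← Multiset.cons_coe a (T.take j), ← Multiset.cons_coe a (T'.take _), cons_sub_cons']
        have hsub : ((↑(a :: T) : Multiset α) - ↑(a :: T')) = (↑T : Multiset α) - ↑T' := by
          rw [← Multiset.cons_coe a T, ← Multiset.cons_coe a T', cons_sub_cons']
        rw [hsub]
        have ih := key r T T' hL.of_cons hL'.of_cons j d
        simp only [List.length_cons]
        push_cast at ih ⊢
        omega
      · rcases Std.Total.total (r := r) a a' with hr | hr
        · -- a strictly below the head of L' : a ∉ a'::T'
          have haL' : a ∉ (a' :: T') := by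
            intro hmem
            rcases List.mem_cons.1 hmem with rfl | hmem'
            · exact hne rfl
            · exact hne (_root_.antisymm hr (List.rel_of_pairwise_cons hL' hmem'))
          have hcast2 : ((j : ℤ) + 1 + d) = (j : ℤ) + (d + 1) := by ring
          rw [hcast2, List.take_succ_cons, ← Multiset.cons_coe a (T.take j)]
          have hatake : a ∉ (↑((a' :: T').take ((j : ℤ) + (d+1)).toNat) : Multiset α) := by
            intro h
            exact haL' (List.take_subset _ _ (Multiset.mem_coe.1 h))
          rw [cons_sub_of_not_mem' hatake, Multiset.card_cons]
          have hsub : ((↑(a :: T) : Multiset α) - ↑(a' :: T')) =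
              a ::ₘ ((↑T : Multiset α) - ↑(a' :: T')) := by
            rw [← Multiset.cons_coe a T]
            exact cons_sub_of_not_mem' (by simpa using haL')
          rw [hsub, Multiset.card_cons]
          have ih := key r T (a' :: T') hL.of_cons hL' j (d + 1)
          simp only [List.length_cons] at ih ⊢
          push_cast at ih ⊢
          omega
        · -- a' strictly below the head of L : a' ∉ a::T
          have ha'L : a' ∉ (a :: T) := by
            intro hmem
            rcases List.mem_cons.1 hmem with rfl | hmem'
            · exact hne rfl
            · exact hne (_root_.antisymm (List.rel_of_pairwise_cons hL hmem') hr)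
          have hm : ((j : ℤ) + 1 + d).toNat = ((↑(j+1) : ℤ) + (d - 1)).toNat + 1 := by
            push_cast; omega
          rw [hm, List.take_succ_cons, List.take_succ_cons,
            ← Multiset.cons_coe a' (T'.take _)]
          have ha'take : a' ∉ (↑(a :: List.take j T) : Multiset α) := by
            intro h
            rcases List.mem_cons.1 (Multiset.mem_coe.1 h) with rfl | h'
            · exact ha'L List.mem_cons_self
            · exact ha'L (List.mem_cons_of_mem _ (List.take_subset _ _ h'))
          rw [sub_cons_of_not_mem' ha'take]
          have hsub : ((↑(a :: T) : Multiset α) - ↑(a' :: T')) =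
              (↑(a :: T) : Multiset α) - ↑T' := by
            rw [← Multiset.cons_coe a' T']
            exact sub_cons_of_not_mem' (by simpa using ha'L)
          rw [hsub]
          have ih := key r (a :: T) T' hL hL'.of_cons (j+1) (d - 1)
          rw [List.take_succ_cons] at ih
          simp only [List.length_cons] at ih ⊢
          push_cast at ih ⊢
          omega
  termination_by L L' _ _ j d => L.length + L'.length
  decreasing_by all_goals simp [List.length_cons] <;> omega

end Helpers

section Final

private lemma final_aux {α : Type*} [DecidableEq α] (r : α → α → Prop)
    [IsTrans α r] [IsAntisymm α r] [IsTotal α r]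
    (k : ℕ) {L L' : List α} (hL : L.Pairwise r) (hL' : L'.Pairwise r)
    (D D' : Multiset α) (hD : (↑L : Multiset α) = D) (hD' : (↑L' : Multiset α) = D') :
    max (Multiset.card (↑(L.take k) : Multiset α)) (Multiset.card (↑(L'.take k) : Multiset α))
        - Multiset.card ((↑(L.take k) : Multiset α) ∩ ↑(L'.take k))
      ≤ max D.card D'.card - (D ∩ D').card := by
  subst hD hD'
  have h1 := key r L L' hL hL' k 0
  have h2 := key r L' L hL' hL k 0
  have hk : ((k : ℤ) + 0).toNat = k := by omega
  rw [hk] at h1 h2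
  have e1 := card_sub_eq' (↑(L.take k) : Multiset α) (↑(L'.take k))
  have e2 := card_sub_eq' (↑(L'.take k) : Multiset α) (↑(L.take k))
  have e3 := card_sub_eq' (↑L : Multiset α) (↑L')
  have e4 := card_sub_eq' (↑L' : Multiset α) (↑L)
  have e5 : ((↑L' : Multiset α) ∩ ↑L).card = ((↑L : Multiset α) ∩ ↑L').card := by
    rw [Multiset.inter_comm]
  have e6 : ((↑(L'.take k) : Multiset α) ∩ ↑(L.take k)).card
      = ((↑(L.take k) : Multiset α) ∩ ↑(L'.take k)).card := by rw [Multiset.inter_comm]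
  have i1 : ((↑L : Multiset α) ∩ ↑L').card ≤ (↑L : Multiset α).card :=
    Multiset.card_le_card Multiset.inter_le_left
  have i2 : ((↑L : Multiset α) ∩ ↑L').card ≤ (↑L' : Multiset α).card :=
    Multiset.card_le_card Multiset.inter_le_right
  have j1 : ((↑(L.take k) : Multiset α) ∩ ↑(L'.take k)).card
      ≤ (↑(L.take k) : Multiset α).card :=
    Multiset.card_le_card Multiset.inter_le_left
  have j2 : ((↑(L.take k) : Multiset α) ∩ ↑(L'.take k)).card
      ≤ (↑(L'.take k) : Multiset α).card :=
    Multiset.card_le_card Multiset.inter_le_right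
  have c1 : (↑L : Multiset α).card = L.length := Multiset.coe_card L
  have c2 : (↑L' : Multiset α).card = L'.length := Multiset.coe_card L'
  have c3 : (↑(L.take k) : Multiset α).card = min k L.length := by
    rw [Multiset.coe_card, List.length_take]
  have c4 : (↑(L'.take k) : Multiset α).card = min k L'.length := by
    rw [Multiset.coe_card, List.length_take]
  omega

end Final


/-- the poisoning size between the kNN neighbor multisets is at most the
poisoning size between the training datasets. -/
theorem knn_neighbors_pSize_le {X : Type*} [MetricSpace X] {c : ℕ} (hc : 2 ≤ c)
    (k : ℕ) {ρ : X × Fin c → ℕ} (hρ : Function.Injective ρ) (x : X)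
    (D D' : Multiset (X × Fin c)) :
    pSize (Nk hρ k D x) (Nk hρ k D' x) ≤ pSize D D' := by
  letI := Classical.decEq (X × Fin c)
  letI : DecidableRel (knnLE ρ x) := Classical.decRel _
  haveI : IsTrans _ (knnLE ρ x) := ⟨by
    rintro p q s (h1 | ⟨h1, h1'⟩) (h2 | ⟨h2, h2'⟩)
    · exact Or.inl (h1.trans h2)
    · exact Or.inl (h1.trans_eq h2)
    · exact Or.inl (h1.trans_lt h2)
    · exact Or.inr ⟨h1.trans h2, h2'.trans h1'⟩⟩
  haveI : IsAntisymm _ (knnLE ρ x) := ⟨by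
    rintro p q (h1 | ⟨h1, h1'⟩) (h2 | ⟨h2, h2'⟩)
    · exact absurd h2 (lt_asymm h1)
    · exact absurd h2.symm h1.ne
    · exact absurd h1.symm h2.ne
    · exact hρ (le_antisymm h2' h1')⟩
  haveI : IsTotal _ (knnLE ρ x) := ⟨by
    intro p q
    rcases lt_trichotomy (dist p.1 x) (dist q.1 x) with h | h | h
    · exact Or.inl (Or.inl h)
    · rcases le_total (ρ q) (ρ p) with h' | h'
      · exact Or.inl (Or.inr ⟨h, h'⟩)
      · exact Or.inr (Or.inr ⟨h.symm, h'⟩)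
    · exact Or.inr (Or.inl h)⟩
  exact final_aux (knnLE ρ x) k (Multiset.pairwise_sort _ _) (Multiset.pairwise_sort _ _) D D'
    (Multiset.sort_eq _ _) (Multiset.sort_eq _ _)
end

section
/- Let X be a metric space, c ≥ 2, k a natural number, ρ : X × Fin c → ℕ injective, D and D* multisets over X × Fin c, and x : X. Then for every label l ∈ Fin c, the vote counts among kNN neighbors satisfy s_l(N_k(D,x)) − S(D,D*) ≤ s_l(N_k(D*,x)) ≤ s_l(N_k(D,x)) + S(D,D*). -/
private lemma take_sublist_decomp {α : Type*} [DecidableEq α] {l₁ l₂ : List α}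
    (h : List.Sublist l₁ l₂) (k : ℕ) :
    ∃ j ≤ l₁.length, (↑(l₁.take j) : Multiset α) ≤ ↑(l₂.take k) ∧
      (↑(l₂.take k) : Multiset α) - (↑(l₁.take j) : Multiset α) ≤
        (↑l₂ : Multiset α) - (↑l₁ : Multiset α) := by
  induction h generalizing k with
  | slnil => exact ⟨0, le_rfl, by simp, by simp⟩
  | @cons l₁ l₂ a h ih =>
    cases k with
    | zero =>
      refine ⟨0, Nat.zero_le _, by simp, ?_⟩
      simp
    | succ k =>
      obtain ⟨j, hj, h1, h2⟩ := ih k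
      have hl : (↑l₁ : Multiset α) ≤ ↑l₂ := Multiset.coe_le.mpr h.subperm
      refine ⟨j, hj, ?_, ?_⟩
      · exact h1.trans (by simpa [Multiset.cons_coe] using Multiset.le_cons_self (↑(l₂.take k)) a)
      · simp only [List.take_succ_cons, ← Multiset.cons_coe]
        rw [Multiset.cons_sub_of_le _ h1, Multiset.cons_sub_of_le _ hl]
        exact Multiset.cons_le_cons _ h2
  | @cons_cons l₁ l₂ a h ih =>
    cases k with
    | zero =>
      refine ⟨0, Nat.zero_le _, by simp, ?_⟩
      simp
    | succ k =>
      obtain ⟨j, hj, h1, h2⟩ := ih k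
      refine ⟨j + 1, by simpa using Nat.succ_le_succ hj, ?_, ?_⟩
      · simp only [List.take_succ_cons, ← Multiset.cons_coe]
        exact Multiset.cons_le_cons _ h1
      · simpa [List.take_succ_cons, ← Multiset.cons_coe, Multiset.sub_cons,
          Multiset.erase_cons_head] using h2

section NkHelpers

variable {X : Type*} [MetricSpace X] {c : ℕ} {ρ : X × Fin c → ℕ}

private lemma instTrans (hρ : Function.Injective ρ) (x : X) : IsTrans _ (knnLE ρ x) := ⟨by
    rintro p q s (h1 | ⟨h1, h1'⟩) (h2 | ⟨h2, h2'⟩)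
    · exact Or.inl (h1.trans h2)
    · exact Or.inl (h1.trans_eq h2)
    · exact Or.inl (h1.trans_lt h2)
    · exact Or.inr ⟨h1.trans h2, h2'.trans h1'⟩⟩

private lemma instAnti (hρ : Function.Injective ρ) (x : X) : IsAntisymm _ (knnLE ρ x) := ⟨by
    rintro p q (h1 | ⟨h1, h1'⟩) (h2 | ⟨h2, h2'⟩)
    · exact absurd h2 (lt_asymm h1)
    · exact absurd h2.symm h1.ne
    · exact absurd h1.symm h2.ne
    · exact hρ (le_antisymm h2' h1')⟩

private lemma instTot (hρ : Function.Injective ρ) (x : X) : IsTotal _ (knnLE ρ x) := ⟨by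
    intro p q
    rcases lt_trichotomy (dist p.1 x) (dist q.1 x) with h | h | h
    · exact Or.inl (Or.inl h)
    · rcases le_total (ρ q) (ρ p) with h' | h'
      · exact Or.inl (Or.inr ⟨h, h'⟩)
      · exact Or.inr (Or.inr ⟨h.symm, h'⟩)
    · exact Or.inr (Or.inl h)⟩

private lemma take_le_take {α : Type*} {i j : ℕ} (h : i ≤ j) (L : List α) :
    (↑(L.take i) : Multiset α) ≤ ↑(L.take j) := by
  have heq : L.take i = (L.take j).take i := by rw [List.take_take, Nat.min_eq_left h]
  rw [heq]
  exact Multiset.coe_le.mpr (List.take_sublist _ _).subperm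

private lemma nk_eq (hρ : Function.Injective ρ) (x : X) (k : ℕ) (D : Multiset (X × Fin c)) :
    haveI : DecidableRel (knnLE ρ x) := Classical.decRel _
    haveI := instTrans hρ x
    haveI := instAnti hρ x
    haveI := instTot hρ x
    Nk hρ k D x = (↑((D.sort (knnLE ρ x)).take k) : Multiset (X × Fin c)) := rfl

private lemma card_nk (hρ : Function.Injective ρ) (x : X) (k : ℕ) (D : Multiset (X × Fin c)) :
    Multiset.card (Nk hρ k D x) = min k (Multiset.card D) := by
  letI : DecidableRel (knnLE ρ x) := Classical.decRel _
  letI := instTrans hρ x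
  letI := instAnti hρ x
  letI := instTot hρ x
  rw [nk_eq, Multiset.coe_card, List.length_take, Multiset.length_sort]

private lemma nk_mono (hρ : Function.Injective ρ) (x : X) {i j : ℕ} (h : i ≤ j)
    (D : Multiset (X × Fin c)) : Nk hρ i D x ≤ Nk hρ j D x := by
  letI : DecidableRel (knnLE ρ x) := Classical.decRel _
  letI := instTrans hρ x
  letI := instAnti hρ x
  letI := instTot hρ x
  rw [nk_eq, nk_eq]
  exact take_le_take h _

private lemma nk_key [DecidableEq (X × Fin c)] (hρ : Function.Injective ρ) (x : X) (k : ℕ)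
    {E F : Multiset (X × Fin c)} (hEF : E ≤ F) :
    ∃ j, Multiset.card (Nk hρ j E x) = j ∧ Nk hρ j E x ≤ Nk hρ k F x ∧
      Nk hρ k F x - Nk hρ j E x ≤ F - E := by
  letI : DecidableRel (knnLE ρ x) := Classical.decRel _
  letI := instTrans hρ x
  letI := instAnti hρ x
  letI := instTot hρ x
  have hsub : List.Sublist (E.sort (knnLE ρ x)) (F.sort (knnLE ρ x)) :=
    List.sublist_of_subperm_of_pairwise
      (by rw [← Multiset.coe_le, Multiset.sort_eq, Multiset.sort_eq]; exact hEF)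
      (Multiset.pairwise_sort _ _) (Multiset.pairwise_sort _ _)
  obtain ⟨j, hj, h1, h2⟩ := take_sublist_decomp hsub k
  refine ⟨j, ?_, ?_, ?_⟩
  · rw [nk_eq, Multiset.coe_card, List.length_take]
    exact Nat.min_eq_left hj
  · rw [nk_eq, nk_eq]; exact h1
  · rw [nk_eq, nk_eq]
    rwa [Multiset.sort_eq, Multiset.sort_eq] at h2

private lemma votes_decomp [DecidableEq (X × Fin c)] {A B : Multiset (X × Fin c)} (h : A ≤ B)
    (l : Fin c) : votes B l = votes A l + votes (B - A) l := by
  unfold votes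
  rw [← Multiset.countP_add, add_tsub_cancel_of_le h]

private lemma one_side [DecidableEq (X × Fin c)] (hρ : Function.Injective ρ) (x : X) (k : ℕ)
    (D Dstar : Multiset (X × Fin c)) (l : Fin c) :
    votes (Nk hρ k Dstar x) l ≤ votes (Nk hρ k D x) l +
      (max (Multiset.card D) (Multiset.card Dstar) - Multiset.card (D ∩ Dstar)) := by
  obtain ⟨j₁, hj₁, h₁le, h₁sub⟩ := nk_key hρ x k (Multiset.inter_le_left (s := D) (t := Dstar))
  obtain ⟨j₂, hj₂, h₂le, h₂sub⟩ := nk_key hρ x k (Multiset.inter_le_right (s := D) (t := Dstar))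
  have hcC_D : Multiset.card (D ∩ Dstar) ≤ Multiset.card D :=
    Multiset.card_le_card (Multiset.inter_le_left)
  have hcC_Ds : Multiset.card (D ∩ Dstar) ≤ Multiset.card Dstar :=
    Multiset.card_le_card (Multiset.inter_le_right)
  have hv1 := votes_decomp h₁le l
  have hv2 := votes_decomp h₂le l
  have he1 : Multiset.card (Nk hρ k D x - Nk hρ j₁ (D ∩ Dstar) x) ≤
      Multiset.card D - Multiset.card (D ∩ Dstar) :=
    (Multiset.card_le_card h₁sub).trans_eq (Multiset.card_sub (Multiset.inter_le_left))
  have he2 : Multiset.card (Nk hρ k Dstar x - Nk hρ j₂ (D ∩ Dstar) x) ≤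
      Multiset.card Dstar - Multiset.card (D ∩ Dstar) :=
    (Multiset.card_le_card h₂sub).trans_eq (Multiset.card_sub (Multiset.inter_le_right))
  have hvr1 : votes (Nk hρ k D x - Nk hρ j₁ (D ∩ Dstar) x) l ≤
      Multiset.card (Nk hρ k D x - Nk hρ j₁ (D ∩ Dstar) x) := Multiset.countP_le_card _ _
  have hvr2 : votes (Nk hρ k Dstar x - Nk hρ j₂ (D ∩ Dstar) x) l ≤
      Multiset.card (Nk hρ k Dstar x - Nk hρ j₂ (D ∩ Dstar) x) := Multiset.countP_le_card _ _
  have hcard1 : Multiset.card (Nk hρ k D x) = min k (Multiset.card D) := card_nk hρ x k D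
  have hcard2 : Multiset.card (Nk hρ k Dstar x) = min k (Multiset.card Dstar) :=
    card_nk hρ x k Dstar
  have hj₁le : j₁ ≤ Multiset.card (Nk hρ k D x) := hj₁ ▸ Multiset.card_le_card h₁le
  have hj₂le : j₂ ≤ Multiset.card (Nk hρ k Dstar x) := hj₂ ▸ Multiset.card_le_card h₂le
  have hcr1 : Multiset.card (Nk hρ k D x - Nk hρ j₁ (D ∩ Dstar) x) =
      Multiset.card (Nk hρ k D x) - j₁ := by rw [Multiset.card_sub h₁le, hj₁]
  have hcr2 : Multiset.card (Nk hρ k Dstar x - Nk hρ j₂ (D ∩ Dstar) x) =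
      Multiset.card (Nk hρ k Dstar x) - j₂ := by rw [Multiset.card_sub h₂le, hj₂]
  rcases le_or_gt j₂ j₁ with h | h
  · have hVV : votes (Nk hρ j₂ (D ∩ Dstar) x) l ≤ votes (Nk hρ j₁ (D ∩ Dstar) x) l :=
      Multiset.countP_le_of_le _ (nk_mono hρ x h _)
    omega
  · have hmono := nk_mono hρ x h.le (D ∩ Dstar)
    have hVV := votes_decomp hmono l
    have hVVc : votes (Nk hρ j₂ (D ∩ Dstar) x - Nk hρ j₁ (D ∩ Dstar) x) l ≤ j₂ - j₁ := by
      have := Multiset.countP_le_card (fun p : X × Fin c => p.2 = l)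
        (Nk hρ j₂ (D ∩ Dstar) x - Nk hρ j₁ (D ∩ Dstar) x)
      rw [Multiset.card_sub hmono, hj₁, hj₂] at this
      exact this
    omega


end NkHelpers

/-- each label's vote count among the kNN neighbors changes by at most the
poisoning size `S(D,D*)`. -/
theorem knn_votes_stable {X : Type*} [MetricSpace X] {c : ℕ} (hc : 2 ≤ c)
    (k : ℕ) {ρ : X × Fin c → ℕ} (hρ : Function.Injective ρ)
    (D Dstar : Multiset (X × Fin c)) (x : X) (l : Fin c) :
    (votes (Nk hρ k D x) l : ℤ) - (pSize D Dstar : ℤ) ≤ (votes (Nk hρ k Dstar x) l : ℤ) ∧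
      (votes (Nk hρ k Dstar x) l : ℤ) ≤ (votes (Nk hρ k D x) l : ℤ) + (pSize D Dstar : ℤ) := by
  letI := Classical.decEq (X × Fin c)
  have hps : pSize D Dstar =
      max (Multiset.card D) (Multiset.card Dstar) - Multiset.card (D ∩ Dstar) := rfl
  have h1 := one_side hρ x k D Dstar l
  have h2 := one_side hρ x k Dstar D l
  rw [Multiset.inter_comm, max_comm] at h2
  rw [hps]
  constructor <;> omega
end

section
/- Let m and e be natural numbers and c : Fin m → ℕ a nonincreasing sequence (i ≤ j implies c j ≤ c i). Let w be the least natural number w' ≤ m such that Σ_{i : w' ≤ i < m} c i ≤ e (such w' exists since the empty tail sum at w' = m is ≤ e). Then every finite set M of indices in Fin m with Σ_{i∈M} c i ≤ e satisfies m − |M| ≥ w; equivalently, at least w indices lie outside M. -/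
lemma tail_sum_le_sum {m : ℕ} (c : Fin m → ℕ) (hc : Antitone c) :
    ∀ k (M : Finset (Fin m)), M.card = k →
      ∑ i ∈ Finset.univ.filter (fun i : Fin m => m - k ≤ (i : ℕ)), c i ≤ ∑ i ∈ M, c i := by
  intro k
  induction k with
  | zero =>
      intro M _
      have h : Finset.univ.filter (fun i : Fin m => m - 0 ≤ (i : ℕ)) = ∅ := by
        ext i
        simp only [Finset.mem_filter, Finset.mem_univ, true_and,
          Finset.notMem_empty, iff_false, not_le]
        omega
      rw [h, Finset.sum_empty]
      exact Nat.zero_le _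
  | succ k ih =>
      intro M hMk
      have hne : M.Nonempty := Finset.card_pos.mp (by omega)
      set a := M.min' hne with ha
      have hkm : k + 1 ≤ m := by
        have := Finset.card_le_univ M
        simpa [hMk, Finset.card_univ] using this
      have ha_le : (a : ℕ) ≤ m - (k + 1) := by
        have hsub : M.image Fin.val ⊆ Finset.Ico (a : ℕ) m := by
          intro x hx
          obtain ⟨i, hi, rfl⟩ := Finset.mem_image.mp hx
          exact Finset.mem_Ico.mpr ⟨M.min'_le i hi, i.isLt⟩
        have hcard := Finset.card_le_card hsub
        rw [Finset.card_image_of_injective _ Fin.val_injective, hMk,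
          Nat.card_Ico] at hcard
        omega
      set t : Fin m := ⟨m - (k + 1), by omega⟩ with ht
      have hsplit : Finset.univ.filter (fun i : Fin m => m - (k + 1) ≤ (i : ℕ)) =
          insert t (Finset.univ.filter (fun i : Fin m => m - k ≤ (i : ℕ))) := by
        ext i
        simp [ht, Fin.ext_iff]
        omega
      have htnot : t ∉ Finset.univ.filter (fun i : Fin m => m - k ≤ (i : ℕ)) := by
        simp [ht]; omega
      rw [hsplit, Finset.sum_insert htnot]
      have hat : a ≤ t := by
        rw [Fin.le_def]; exact ha_le
      have hct : c t ≤ c a := hc hat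
      have hIH := ih (M.erase a) (by simp [ha, Finset.card_erase_of_mem (M.min'_mem hne), hMk])
      calc c t + ∑ i ∈ Finset.univ.filter (fun i : Fin m => m - k ≤ (i : ℕ)), c i
          ≤ c a + ∑ i ∈ M.erase a, c i := Nat.add_le_add hct hIH
        _ = ∑ i ∈ M, c i := Finset.add_sum_erase M c (M.min'_mem hne)

/-- let `w` be the least `w' ≤ m` whose tail sum `∑_{w' ≤ i < m} c i` is at
most `e`. Then every index set `M` with `∑_{i ∈ M} c i ≤ e` satisfies `m - |M| ≥ w`. -/
theorem least_tail_le_of_sum_le {m e : ℕ} (c : Fin m → ℕ) (hc : Antitone c) (w : ℕ)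
    (hw : IsLeast {w' : ℕ | w' ≤ m ∧
      ∑ i ∈ Finset.univ.filter (fun i : Fin m => w' ≤ (i : ℕ)), c i ≤ e} w)
    (M : Finset (Fin m)) (hM : ∑ i ∈ M, c i ≤ e) :
    w ≤ m - M.card := by
  exact hw.2 ⟨Nat.sub_le _ _, le_trans (tail_sum_le_sum c hc M.card M rfl) hM⟩
end
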